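/- Let A be a 3×3 complex symmetric traceless matrix such that for all diagonal traceless B and all diagonal C one has ABC + CBA − BAC − CAB = 0. Then A is diagonal, hence A = diag(r₁,r₂,r₃) with r₁+r₂+r₃ = 0. -/

import Mathlib

open Matrix

/-- if `A` is symmetric traceless and `ABC + CBA − BAC − CAB = 0` for all
diagonal traceless `B` and all diagonal `C`, then `A` is diagonal,
`A = diag(r₁,r₂,r₃)` with `r₁+r₂+r₃ = 0`. -/
theorem stmt_9 (A : Matrix (Fin 3) (Fin 3) ℂ) (hA : A.IsSymm) (htr : A.trace = 0)
    (h : ∀ b c : Fin 3 → ℂ, b 0 + b 1 + b 2 = 0 →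
      A * diagonal b * diagonal c + diagonal c * diagonal b * A
        - diagonal b * A * diagonal c - diagonal c * A * diagonal b = 0) :
    ∃ r : Fin 3 → ℂ, A = diagonal r ∧ r 0 + r 1 + r 2 = 0 := by
  have key := h ![1, 0, -1] ![1, 0, -1] (by show (1:ℂ) + 0 + -1 = 0; norm_num)
  have off : ∀ i j : Fin 3, i ≠ j → A i j = 0 := by
    intro i j hij
    have e := congrFun (congrFun key i) j
    simp only [Matrix.mul_assoc, Matrix.diagonal_mul_diagonal, Matrix.mul_diagonal,
      Matrix.diagonal_mul, Matrix.zero_apply, Matrix.sub_apply, Matrix.add_apply] at e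
    have e2 : A i j * ((![1, 0, -1] : Fin 3 → ℂ) i - ![1, 0, -1] j) ^ 2 = 0 := by
      linear_combination e
    have hbij : ((![1, 0, -1] : Fin 3 → ℂ) i - ![1, 0, -1] j) ≠ 0 := by
      fin_cases i <;> fin_cases j <;> simp_all <;> norm_num
    rcases mul_eq_zero.1 e2 with h1 | h1
    · exact h1
    · exact absurd (pow_eq_zero_iff (by norm_num) |>.1 h1) hbij
  refine ⟨fun i => A i i, ?_, ?_⟩
  · ext i j
    by_cases hij : i = j
    · subst hij; simp
    · rw [Matrix.diagonal_apply_ne _ hij]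
      exact off i j hij
  · simpa [Matrix.trace, Fin.sum_univ_three] using htr
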